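/- arXiv:2006.05027 — 2 statements merged into one kernel-verified Lean document; each statement's English description precedes it below -/
import Mathlib

section
/- Fix real numbers λ > 0, ℓ ≥ 0 and an angle θ ∈ (0, π), and let S_θ = {(x, y) ∈ ℝ² : y·cos θ/sin θ ≤ x ≤ ℓ + y·cos θ/sin θ}. Then λ · ∫∫_{S_θ} exp(−λ π y² / sin² θ) dx dy = ℓ · √λ · sin θ, where the double integral is the Lebesgue integral over the strip S_θ ⊆ ℝ². -/
open MeasureTheory Real

/-- Main integral computation for the intensity of beam reselection: for `λ > 0`,
`ℓ ≥ 0` and `θ ∈ (0, π)`, the integral over the strip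
`S_θ = {(x, y) : y cos θ / sin θ ≤ x ≤ ℓ + y cos θ / sin θ}` of
`exp(-λ π y² / sin² θ)` times `λ` equals `ℓ √λ sin θ`. -/
theorem strip_integral (lam ℓ θ : ℝ) (hlam : 0 < lam) (hℓ : 0 ≤ ℓ)
    (hθ : θ ∈ Set.Ioo 0 Real.pi) :
    lam * ∫ p in {p : ℝ × ℝ |
        p.2 * Real.cos θ / Real.sin θ ≤ p.1 ∧
        p.1 ≤ ℓ + p.2 * Real.cos θ / Real.sin θ},
        Real.exp (-(lam * Real.pi * p.2 ^ 2 / Real.sin θ ^ 2))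
      = ℓ * Real.sqrt lam * Real.sin θ := by
  obtain ⟨hθ0, hθπ⟩ := hθ
  have hs : 0 < Real.sin θ := Real.sin_pos_of_pos_of_lt_pi hθ0 hθπ
  set s := Real.sin θ with hsdef
  set c : ℝ := lam * Real.pi / s ^ 2 with hcdef
  have hc : 0 < c := div_pos (mul_pos hlam Real.pi_pos) (pow_pos hs 2)
  set S : Set (ℝ × ℝ) := {p : ℝ × ℝ |
      p.2 * Real.cos θ / s ≤ p.1 ∧ p.1 ≤ ℓ + p.2 * Real.cos θ / s} with hSdef
  have hSmeas : MeasurableSet S := by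
    apply MeasurableSet.inter
    · exact measurableSet_le (by fun_prop) measurable_fst
    · exact measurableSet_le measurable_fst (by fun_prop)
  set F : ℝ × ℝ → ℝ := fun p => Real.exp (-(lam * Real.pi * p.2 ^ 2 / s ^ 2)) with hFdef
  set f : ℝ × ℝ → ℝ := S.indicator F with hfdef
  have hfxy : ∀ y x : ℝ, f (x, y) =
      (Set.Icc (y * Real.cos θ / s) (ℓ + y * Real.cos θ / s)).indicator
        (fun _ => Real.exp (-(c * y ^ 2))) x := by
    intro y x
    have hmem : (x, y) ∈ S ↔ x ∈ Set.Icc (y * Real.cos θ / s) (ℓ + y * Real.cos θ / s) := by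
      simp [hSdef, Set.mem_Icc]
    have hF : F (x, y) = Real.exp (-(c * y ^ 2)) := by
      simp only [hFdef, hcdef]; ring_nf
    show S.indicator F (x, y) = _
    by_cases h : (x, y) ∈ S
    · rw [Set.indicator_of_mem h, Set.indicator_of_mem (hmem.1 h), hF]
    · rw [Set.indicator_of_notMem h, Set.indicator_of_notMem (fun h' => h (hmem.2 h'))]
  have hslice : ∀ y : ℝ, ∫ x, f (x, y) = ℓ * Real.exp (-(c * y ^ 2)) := by
    intro y
    simp only [hfxy y]
    rw [MeasureTheory.integral_indicator measurableSet_Icc, setIntegral_const,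
      measureReal_def, Real.volume_Icc, smul_eq_mul]
    have : ℓ + y * Real.cos θ / s - y * Real.cos θ / s = ℓ := by ring
    rw [this, ENNReal.toReal_ofReal hℓ]
  have hslice_int : ∀ y : ℝ, Integrable (fun x => f (x, y)) := by
    intro y
    simp only [hfxy y]
    exact (integrableOn_const (by simp [Real.volume_Icc])).integrable_indicator
      measurableSet_Icc
  have hfnn : ∀ p, 0 ≤ f p := fun p =>
    Set.indicator_nonneg (fun q _ => (Real.exp_pos _).le) p
  have hmeasf : AEStronglyMeasurable f ((volume : Measure ℝ).prod volume) := by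
    rw [← MeasureTheory.Measure.volume_eq_prod]
    exact ((Measurable.indicator (by fun_prop) hSmeas).aestronglyMeasurable)
  have hgauss : Integrable (fun y : ℝ => Real.exp (-(c * y ^ 2))) := by
    simpa using integrable_exp_neg_mul_sq hc
  have hint : Integrable f ((volume : Measure ℝ).prod volume) := by
    rw [MeasureTheory.integrable_prod_iff' hmeasf]
    constructor
    · exact Filter.Eventually.of_forall hslice_int
    · have : (fun y => ∫ x, ‖f (x, y)‖) = fun y => ℓ * Real.exp (-(c * y ^ 2)) := by
        funext y
        rw [← hslice y]
        congr 1
        funext x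
        exact Real.norm_of_nonneg (hfnn _)
      rw [this]
      exact hgauss.const_mul ℓ
  have key : ∫ p in S, F p = ℓ * Real.sqrt (Real.pi / c) := by
    rw [← MeasureTheory.integral_indicator hSmeas, ← hfdef,
      MeasureTheory.Measure.volume_eq_prod, MeasureTheory.integral_prod_symm f hint]
    simp only [hslice]
    rw [MeasureTheory.integral_const_mul]
    congr 1
    simpa using integral_gaussian c
  rw [key]
  have hπc : Real.pi / c = s ^ 2 / lam := by
    rw [hcdef]; field_simp
  rw [hπc, Real.sqrt_div (sq_nonneg s), Real.sqrt_sq hs.le]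
  have h1 : Real.sqrt lam ≠ 0 := (Real.sqrt_pos.2 hlam).ne'
  have h2 : Real.sqrt lam * Real.sqrt lam = lam := Real.mul_self_sqrt hlam.le
  calc lam * (ℓ * (s / Real.sqrt lam)) = lam / Real.sqrt lam * ℓ * s := by ring
    _ = Real.sqrt lam * ℓ * s := by rw [Real.div_sqrt]
    _ = ℓ * Real.sqrt lam * s := by ring
end

section
/- Fix a real number λ > 0, a real number ℓ ≥ 0, and a positive integer n. For θ ∈ (0, π) let S_θ = {(x, y) ∈ ℝ² : y·cos θ/sin θ ≤ x ≤ ℓ + y·cos θ/sin θ}. Then 2^{n−1} · (1/π) · ∫₀^π ( λ · ∫∫_{S_θ} exp(−λ π y² / sin² θ) dx dy ) dθ = (2^n √λ / π) · ℓ. -/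
open MeasureTheory Real

lemma beam_inner (lam ℓ : ℝ) (hlam : 0 < lam) (hℓ : 0 ≤ ℓ)
    {θ : ℝ} (hθ : θ ∈ Set.Ioo (0:ℝ) Real.pi) :
    (lam * ∫ p in {p : ℝ × ℝ |
        p.2 * Real.cos θ / Real.sin θ ≤ p.1 ∧
        p.1 ≤ ℓ + p.2 * Real.cos θ / Real.sin θ},
        Real.exp (-(lam * Real.pi * p.2 ^ 2 / Real.sin θ ^ 2)))
      = Real.sqrt lam * ℓ * Real.sin θ := by
  have hs : 0 < Real.sin θ := Real.sin_pos_of_pos_of_lt_pi hθ.1 hθ.2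
  set c : ℝ := lam * Real.pi / Real.sin θ ^ 2 with hc
  have hcpos : 0 < c := div_pos (mul_pos hlam Real.pi_pos) (by positivity)
  set a : ℝ → ℝ := fun y => y * Real.cos θ / Real.sin θ with ha
  set S : Set (ℝ × ℝ) := {p : ℝ × ℝ | a p.2 ≤ p.1 ∧ p.1 ≤ ℓ + a p.2} with hS
  have hexp : ∀ p : ℝ × ℝ, Real.exp (-(lam * Real.pi * p.2 ^ 2 / Real.sin θ ^ 2))
      = Real.exp (-(c * p.2 ^ 2)) := by
    intro p; congr 1; rw [hc]; ring
  have hSmeas : MeasurableSet S := by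
    have hSeq : S = {p : ℝ × ℝ | a p.2 ≤ p.1} ∩ {p : ℝ × ℝ | p.1 ≤ ℓ + a p.2} := rfl
    rw [hSeq]
    refine MeasurableSet.inter (measurableSet_le ?_ measurable_fst)
      (measurableSet_le measurable_fst ?_)
    · exact (measurable_snd.mul_const _).div_const _
    · exact measurable_const.add ((measurable_snd.mul_const _).div_const _)
  set F : ℝ × ℝ → ℝ := S.indicator (fun p => Real.exp (-(c * p.2 ^ 2))) with hF
  have hFslice : ∀ y : ℝ, (fun x => F (x, y))
      = (Set.Icc (a y) (ℓ + a y)).indicator (fun _ => Real.exp (-(c * y ^ 2))) := by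
    intro y; funext x
    simp only [hF, hS, Set.indicator_apply, Set.mem_setOf_eq, Set.mem_Icc]
  have hslice_int : ∀ y : ℝ, ∫ x : ℝ, F (x, y) = ℓ * Real.exp (-(c * y ^ 2)) := by
    intro y
    rw [hFslice y, integral_indicator_const _ measurableSet_Icc, measureReal_def, Real.volume_Icc]
    have h1 : ℓ + a y - a y = ℓ := by ring
    rw [h1, ENNReal.toReal_ofReal hℓ, smul_eq_mul]
  have hFmeas : AEStronglyMeasurable F (volume : Measure (ℝ × ℝ)) := by
    exact AEStronglyMeasurable.indicator
      (Continuous.aestronglyMeasurable (by continuity)) hSmeas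
  have hgauss : Integrable (fun y : ℝ => Real.exp (-c * y ^ 2)) := integrable_exp_neg_mul_sq hcpos
  have hFint : Integrable F (volume : Measure (ℝ × ℝ)) := by
    rw [Measure.volume_eq_prod] at hFmeas ⊢
    rw [integrable_prod_iff' hFmeas]
    constructor
    · refine Filter.Eventually.of_forall fun y => ?_
      rw [hFslice y]
      exact IntegrableOn.integrable_indicator
        (integrableOn_const (by rw [Real.volume_Icc]; exact ENNReal.ofReal_ne_top))
        measurableSet_Icc
    · have : (fun y : ℝ => ∫ x : ℝ, ‖F (x, y)‖) = fun y => ℓ * Real.exp (-c * y ^ 2) := by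
        funext y
        have : ∀ x : ℝ, ‖F (x, y)‖ = F (x, y) := by
          intro x
          rw [Real.norm_eq_abs, abs_of_nonneg]
          exact Set.indicator_nonneg (fun p _ => (Real.exp_pos _).le) _
        simp_rw [this]
        rw [hslice_int y, neg_mul]
      rw [this]
      exact hgauss.const_mul ℓ
  have key : (∫ p in S, Real.exp (-(lam * Real.pi * p.2 ^ 2 / Real.sin θ ^ 2)))
      = ℓ * Real.sqrt (Real.pi / c) := by
    calc (∫ p in S, Real.exp (-(lam * Real.pi * p.2 ^ 2 / Real.sin θ ^ 2)))
        = ∫ p in S, Real.exp (-(c * p.2 ^ 2)) := by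
          exact setIntegral_congr_fun hSmeas fun p _ => hexp p
      _ = ∫ p : ℝ × ℝ, F p := (integral_indicator hSmeas).symm
      _ = ∫ y : ℝ, ∫ x : ℝ, F (x, y) := by
          rw [Measure.volume_eq_prod] at hFint ⊢
          exact integral_prod_symm F hFint
      _ = ∫ y : ℝ, ℓ * Real.exp (-c * y ^ 2) := by
          congr 1; funext y; rw [hslice_int y, neg_mul]
      _ = ℓ * ∫ y : ℝ, Real.exp (-c * y ^ 2) := integral_const_mul ℓ _
      _ = ℓ * Real.sqrt (Real.pi / c) := by rw [integral_gaussian]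
  have hsq : Real.sqrt (Real.pi / c) = Real.sin θ / Real.sqrt lam := by
    have : Real.pi / c = Real.sin θ ^ 2 / lam := by
      rw [hc]; field_simp
    rw [this, Real.sqrt_div (sq_nonneg _), Real.sqrt_sq hs.le]
  rw [key, hsq]
  have hsl : Real.sqrt lam * Real.sqrt lam = lam := Real.mul_self_sqrt hlam.le
  have h0 : Real.sqrt lam ≠ 0 := by positivity
  field_simp
  linear_combination (-ℓ) * (Real.sq_sqrt hlam.le)

/-- Intensity of beam reselection: with `2^n` beams (hence `2^(n-1)` beam boundaries,
each making a uniformly distributed angle `θ ∈ [0, π]` with the direction of motion),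
the expected number of beam reselections over a path of length `ℓ` is
`2^(n-1) · (1/π) · ∫₀^π (λ ∫∫_{S_θ} exp(-λπy²/sin²θ) dx dy) dθ = (2^n √λ / π) ℓ`. -/
theorem beam_reselection_intensity (lam ℓ : ℝ) (n : ℕ) (hlam : 0 < lam)
    (hℓ : 0 ≤ ℓ) (hn : 0 < n) :
    (2 : ℝ) ^ (n - 1) * (1 / Real.pi) *
        ∫ θ in Set.Ioo (0 : ℝ) Real.pi,
          (lam * ∫ p in {p : ℝ × ℝ |
              p.2 * Real.cos θ / Real.sin θ ≤ p.1 ∧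
              p.1 ≤ ℓ + p.2 * Real.cos θ / Real.sin θ},
              Real.exp (-(lam * Real.pi * p.2 ^ 2 / Real.sin θ ^ 2)))
      = (2 : ℝ) ^ n * Real.sqrt lam / Real.pi * ℓ := by
  have h1 : ∫ θ in Set.Ioo (0 : ℝ) Real.pi,
          (lam * ∫ p in {p : ℝ × ℝ |
              p.2 * Real.cos θ / Real.sin θ ≤ p.1 ∧
              p.1 ≤ ℓ + p.2 * Real.cos θ / Real.sin θ},
              Real.exp (-(lam * Real.pi * p.2 ^ 2 / Real.sin θ ^ 2)))
      = ∫ θ in Set.Ioo (0 : ℝ) Real.pi, Real.sqrt lam * ℓ * Real.sin θ := by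
    refine setIntegral_congr_fun measurableSet_Ioo fun θ hθ => ?_
    exact beam_inner lam ℓ hlam hℓ hθ
  rw [h1]
  have h2 : ∫ θ in Set.Ioo (0 : ℝ) Real.pi, Real.sqrt lam * ℓ * Real.sin θ
      = Real.sqrt lam * ℓ * 2 := by
    rw [← MeasureTheory.integral_Ioc_eq_integral_Ioo,
      ← intervalIntegral.integral_of_le Real.pi_pos.le,
      intervalIntegral.integral_const_mul, integral_sin]
    norm_num
  rw [h2]
  have hn2 : (2:ℝ) ^ (n - 1) * 2 = 2 ^ n := by
    rw [← pow_succ]; congr 1; omega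
  have h3 : (2:ℝ) ^ (n - 1) * (1 / Real.pi) * (Real.sqrt lam * ℓ * 2)
      = (2 ^ (n - 1) * 2) * Real.sqrt lam / Real.pi * ℓ := by ring
  rw [h3, hn2]
end
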